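/- Contraction monotonicity of realizability (Proposition 3.1, contraction case): Let (n, E, t, h, z) be ℤ-labelled graph data and let e₀ ∈ E be an edge with z e₀ = 0 and t e₀ ≠ h e₀; write i := t e₀ and j := h e₀. Define contracted data with vertex set Fin n \ {j}, edge set E \ {e₀}, labels unchanged, and tail/head maps t', h' obtained from t, h by replacing every occurrence of j by i. If (n, E, t, h, z) is d-realizable, then the contracted data is d-realizable. -/

import Mathlib

/-- The edge vector of edge `e` of ℤ-labelled graph data with tail map `t`, head map `h`
and labels `z`, with respect to a point configuration `p` and lattice vector `ℓ`. -/
noncomputable def edgeVec {V E : Type*} {m : ℕ} (t h : E → V) (z : E → ℤ)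
    (p : V → EuclideanSpace ℝ (Fin m)) (ℓ : EuclideanSpace ℝ (Fin m)) (e : E) :
    EuclideanSpace ℝ (Fin m) :=
  p (h e) + (z e : ℝ) • ℓ - p (t e)

/-- ℤ-labelled graph data `(V, E, t, h, z)` is `d`-realizable if every periodic framework
`(p, ℓ)` of the data in any dimension `m` admits an equivalent periodic framework in `ℝ^d`. -/
def IsRealizable (V E : Type*) (t h : E → V) (z : E → ℤ) (d : ℕ) : Prop :=
  ∀ (m : ℕ) (p : V → EuclideanSpace ℝ (Fin m)) (ℓ : EuclideanSpace ℝ (Fin m)), ℓ ≠ 0 →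
    ∃ (q : V → EuclideanSpace ℝ (Fin d)) (ℓ' : EuclideanSpace ℝ (Fin d)), ℓ' ≠ 0 ∧
      ‖ℓ'‖ = ‖ℓ‖ ∧ ∀ e : E, ‖edgeVec t h z q ℓ' e‖ = ‖edgeVec t h z p ℓ e‖

/-- Proposition 3.1 (contraction case): contracting an edge `e₀` with label `0` joining two
distinct vertices preserves `d`-realizability.  The contracted data has vertex set
`Fin n \ {h e₀}`, edge set `E \ {e₀}`, unchanged labels, and tail/head maps obtained by
replacing every occurrence of `h e₀` by `t e₀`. -/
theorem contraction_monotone_realizable (n : ℕ) (hn : 1 ≤ n) (E : Type*) [Fintype E]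
    (t h : E → Fin n) (z : E → ℤ) (e₀ : E) (hz0 : z e₀ = 0) (hne : t e₀ ≠ h e₀) (d : ℕ)
    (hreal : IsRealizable (Fin n) E t h z d) :
    IsRealizable {x : Fin n // x ≠ h e₀} {e : E // e ≠ e₀}
      (fun e => if hte : t e.1 = h e₀ then ⟨t e₀, hne⟩ else ⟨t e.1, hte⟩)
      (fun e => if hhe : h e.1 = h e₀ then ⟨t e₀, hne⟩ else ⟨h e.1, hhe⟩)
      (fun e => z e.1) d := by
  intro m p ℓ hℓ
  -- extend `p` to all of `Fin n` by placing `h e₀` at the position of `t e₀`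
  set p' : Fin n → EuclideanSpace ℝ (Fin m) := fun x =>
    if hx : x = h e₀ then p ⟨t e₀, hne⟩ else p ⟨x, hx⟩ with hp'
  have hp'eq : ∀ (x : Fin n) (hx : x ≠ h e₀), p' x = p ⟨x, hx⟩ := by
    intro x hx; simp [hp', hx]
  obtain ⟨q', ℓ', hℓ', hnorm, hedge⟩ := hreal m p' ℓ hℓ
  have hq'eq : q' (h e₀) = q' (t e₀) := by
    have h1 : edgeVec t h z p' ℓ e₀ = 0 := by
      simp [edgeVec, hp', hz0, hne]
    have h2 := hedge e₀
    rw [h1, norm_zero, norm_eq_zero] at h2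
    have h3 : q' (h e₀) + ((z e₀ : ℝ)) • ℓ' - q' (t e₀) = 0 := h2
    rw [hz0] at h3
    simpa [sub_eq_zero] using h3
  refine ⟨fun x => q' x.1, ℓ', hℓ', hnorm, ?_⟩
  intro e
  have lhs : edgeVec (V := {x : Fin n // x ≠ h e₀})
      (fun e => if hte : t e.1 = h e₀ then ⟨t e₀, hne⟩ else ⟨t e.1, hte⟩)
      (fun e => if hhe : h e.1 = h e₀ then ⟨t e₀, hne⟩ else ⟨h e.1, hhe⟩)
      (fun e => z e.1) (fun x => q' x.1) ℓ' e = edgeVec t h z q' ℓ' e.1 := by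
    simp only [edgeVec]
    congr 1
    · congr 1; split <;> simp_all
    · split
      · rename_i hte; simp [hte, hq'eq]
      · simp_all
  have rhs : edgeVec (V := {x : Fin n // x ≠ h e₀})
      (fun e => if hte : t e.1 = h e₀ then ⟨t e₀, hne⟩ else ⟨t e.1, hte⟩)
      (fun e => if hhe : h e.1 = h e₀ then ⟨t e₀, hne⟩ else ⟨h e.1, hhe⟩)
      (fun e => z e.1) p ℓ e = edgeVec t h z p' ℓ e.1 := by
    simp only [edgeVec]
    congr 2
    · split <;> simp [hp', *]
    · split <;> simp [hp', *]
  rw [lhs, rhs]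
  exact hedge e.1
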